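/- The graph G(ω,1122) contains no copy of K_{ω,ω}: there are no two disjoint infinite independent sets A, B of vertices with every vertex of A adjacent to every vertex of B. -/

import Mathlib

/-- Vertices of `G(ω,1122)`: pairs of naturals `(x, y)` with `x < y`. -/
abbrev NV := {p : ℕ × ℕ // p.1 < p.2}

/-- The graph `G(ω, 1122)`: `(x,y)` and `(z,w)` are adjacent iff `y < z` or `w < x`. -/
def NG1122 : SimpleGraph NV where
  Adj a b := a.val.2 < b.val.1 ∨ b.val.2 < a.val.1
  symm := ⟨fun a b h => Or.symm h⟩
  loopless := ⟨fun a h => by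
    rcases h with h | h <;> exact absurd (a.prop.trans h) (lt_irrefl _)⟩

lemma finite_low (n : ℕ) : {v : NV | v.val.2 < n}.Finite := by
  have h : ({p : ℕ × ℕ | p.1 < n} ∩ {p | p.2 < n}).Finite :=
    ((Set.finite_Iio n).prod (Set.finite_Iio n)).subset (fun p hp => ⟨hp.1, hp.2⟩)
  have := h.preimage (Subtype.val_injective (p := fun p : ℕ × ℕ => p.1 < p.2)).injOn
  exact this.subset (fun v hv => ⟨lt_trans v.prop hv, hv⟩)

/-- `G(ω,1122)` contains no copy of `K_{ω,ω}`. -/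
theorem stmt_7 :
    ¬ ∃ A B : Set NV, Disjoint A B ∧ A.Infinite ∧ B.Infinite ∧
      (∀ u ∈ A, ∀ v ∈ A, ¬ NG1122.Adj u v) ∧
      (∀ u ∈ B, ∀ v ∈ B, ¬ NG1122.Adj u v) ∧
      (∀ a ∈ A, ∀ b ∈ B, NG1122.Adj a b) := by
  rintro ⟨A, B, -, hA, hB, hAind, -, hAB⟩
  obtain ⟨a₀, ha₀⟩ := hA.nonempty
  obtain ⟨b₀, hb₀B, hb₀⟩ := (hB.diff (finite_low a₀.val.1)).nonempty
  have h1 : a₀.val.2 < b₀.val.1 := by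
    rcases hAB a₀ ha₀ b₀ hb₀B with h | h
    · exact h
    · exact absurd h hb₀
  obtain ⟨a₁, ha₁A, ha₁⟩ := (hA.diff (finite_low b₀.val.1)).nonempty
  have h2 : b₀.val.2 < a₁.val.1 := by
    rcases hAB a₁ ha₁A b₀ hb₀B with h | h
    · exact absurd h ha₁
    · exact h
  exact hAind a₀ ha₀ a₁ ha₁A (Or.inl (h1.trans (b₀.prop.trans h2)))
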